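/- At a relabeling time N, the gap δ_j = {u_{j+1}α} - {u_j α} (cyclically) is determined by whether u_{j+1} = u_j + u_1 or u_{j+1} = u_j + u_1 - N: the two cases give the two distinct gap lengths {u_1 α}'s fractional translate values; in particular δ_j = δ_{j'} whenever u_{j+1} - u_j = u_{j'+1} - u_{j'}. -/

import Mathlib

/-- The cyclic gap after the point `{m α}` among the points `{0α}, …, {(N-1)α}` on ℝ/ℤ:
the infimum of positive circular distances from `{m α}` to the other points. -/
noncomputable def gapAt (α : ℝ) (N : ℕ) (m : ℕ) : ℝ :=
  sInf {d : ℝ | 0 < d ∧ ∃ m' : ℕ, m' < N ∧ Int.fract ((m' : ℝ) * α - (m : ℝ) * α) = d}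

open Classical in
/-- The set of distinct cyclic gap lengths of the configuration `{0α}, …, {(N-1)α}`. -/
noncomputable def gapSet (α : ℝ) (N : ℕ) : Finset ℝ :=
  (Finset.range N).image (gapAt α N)

/-- The multiset of cyclic gaps of the configuration `{0α}, …, {(N-1)α}`. -/
noncomputable def gapMult (α : ℝ) (N : ℕ) : Multiset ℝ :=
  (Multiset.range N).map (gapAt α N)

/-- Cyclic extension of the ordering permutation `u` to integer indices, mod `N`. -/
def uc (N : ℕ) (u : ℕ → ℕ) (j : ℤ) : ℕ := u ((j % (N : ℤ)).toNat)

private lemma fract_nz (α : ℝ) (hα : Irrational α) {d : ℤ} (hd : d ≠ 0) :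
    0 < Int.fract ((d : ℝ) * α) := by
  rcases (Int.fract_nonneg ((d:ℝ) * α)).lt_or_eq with h | h
  · exact h
  · exfalso
    have hirr : Irrational ((d : ℝ) * α) := hα.intCast_mul hd
    have h2 : (d:ℝ) * α = (⌊(d:ℝ)*α⌋ : ℝ) := by
      have h3 : Int.fract ((d:ℝ)*α) = (d:ℝ)*α - ⌊(d:ℝ)*α⌋ := rfl
      rw [h3] at h
      linarith
    exact hirr.ne_int _ h2

private lemma fract_nzN (α : ℝ) (hα : Irrational α) {e : ℕ} (he : e ≠ 0) :
    0 < Int.fract ((e : ℝ) * α) := by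
  have := fract_nz α hα (d := (e:ℤ)) (by exact_mod_cast he)
  simpa using this

private lemma fract_inj (α : ℝ) (hα : Irrational α) {d d' : ℤ}
    (h : Int.fract ((d:ℝ)*α) = Int.fract ((d':ℝ)*α)) : d = d' := by
  by_contra hne
  have h1 : ((d - d' : ℤ) : ℝ) * α = ((⌊(d:ℝ)*α⌋ - ⌊(d':ℝ)*α⌋ : ℤ) : ℝ) := by
    have h2 : Int.fract ((d:ℝ)*α) = (d:ℝ)*α - ⌊(d:ℝ)*α⌋ := rfl
    have h3 : Int.fract ((d':ℝ)*α) = (d':ℝ)*α - ⌊(d':ℝ)*α⌋ := rfl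
    push_cast
    rw [h2, h3] at h
    linarith
  exact (hα.intCast_mul (sub_ne_zero.2 hne)).ne_int _ h1

private lemma fract_sub_le' {x y : ℝ} (h : Int.fract y ≤ Int.fract x) :
    Int.fract (x - y) = Int.fract x - Int.fract y := by
  have h1 : x - y = (Int.fract x - Int.fract y) + ((⌊x⌋ - ⌊y⌋ : ℤ) : ℝ) := by
    have h2 : Int.fract x = x - ⌊x⌋ := rfl
    have h3 : Int.fract y = y - ⌊y⌋ := rfl
    push_cast; rw [h2, h3]; ring
  rw [h1, Int.fract_add_intCast, Int.fract_eq_self.2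
    ⟨by linarith, by linarith [Int.fract_lt_one x, Int.fract_nonneg y]⟩]

private lemma fract_sub_lt' {x y : ℝ} (h : Int.fract x < Int.fract y) :
    Int.fract (x - y) = Int.fract x - Int.fract y + 1 := by
  have h1 : x - y = (Int.fract x - Int.fract y + 1) + ((⌊x⌋ - ⌊y⌋ - 1 : ℤ) : ℝ) := by
    have h2 : Int.fract x = x - ⌊x⌋ := rfl
    have h3 : Int.fract y = y - ⌊y⌋ := rfl
    push_cast; rw [h2, h3]; ring
  rw [h1, Int.fract_add_intCast, Int.fract_eq_self.2
    ⟨by linarith [Int.fract_nonneg x, Int.fract_lt_one y], by linarith⟩]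

private lemma fract_add_ge1 {x y : ℝ} (h : 1 ≤ Int.fract x + Int.fract y) :
    Int.fract (x + y) = Int.fract x + Int.fract y - 1 := by
  have h1 : x + y = (Int.fract x + Int.fract y - 1) + ((⌊x⌋ + ⌊y⌋ + 1 : ℤ) : ℝ) := by
    have h2 : Int.fract x = x - ⌊x⌋ := rfl
    have h3 : Int.fract y = y - ⌊y⌋ := rfl
    push_cast; rw [h2, h3]; ring
  rw [h1, Int.fract_add_intCast, Int.fract_eq_self.2
    ⟨by linarith, by linarith [Int.fract_lt_one x, Int.fract_lt_one y]⟩]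

private lemma gapAt_eq (α : ℝ) (N m : ℕ) (val : ℝ) (hpos : 0 < val)
    (hmem : ∃ m' : ℕ, m' < N ∧ Int.fract ((m' : ℝ) * α - (m : ℝ) * α) = val)
    (hlb : ∀ m' : ℕ, m' < N → 0 < Int.fract ((m' : ℝ) * α - (m : ℝ) * α) →
      val ≤ Int.fract ((m' : ℝ) * α - (m : ℝ) * α)) :
    gapAt α N m = val := by
  have hbdd : BddBelow {d : ℝ | 0 < d ∧ ∃ m' : ℕ, m' < N ∧
      Int.fract ((m' : ℝ) * α - (m : ℝ) * α) = d} := ⟨0, fun d hd => le_of_lt hd.1⟩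
  unfold gapAt
  refine le_antisymm (csInf_le hbdd ⟨hpos, hmem⟩) (le_csInf ⟨val, hpos, hmem⟩ ?_)
  rintro d ⟨hd, m', hm', rfl⟩
  exact hlb m' hm' hd

private lemma u_lt (N : ℕ) (u : ℕ → ℕ) (hbij : Set.BijOn u (Set.Iio N) (Set.Iio N)) : ∀ j, j < N → u j < N := fun j hj => hbij.mapsTo hj

private lemma u_surj (N : ℕ) (u : ℕ → ℕ) (hbij : Set.BijOn u (Set.Iio N) (Set.Iio N)) : ∀ m, m < N → ∃ k, k < N ∧ u k = m := by
  intro m hm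
  obtain ⟨k, hk, hk0⟩ := hbij.surjOn (show m ∈ Set.Iio N from hm)
  exact ⟨k, hk, hk0⟩

private lemma u_inj (N : ℕ) (u : ℕ → ℕ) (hbij : Set.BijOn u (Set.Iio N) (Set.Iio N)) : ∀ k l, k < N → l < N → u k = u l → k = l := by
  intro k l hk hl h
  exact hbij.injOn hk hl h

private lemma u_zero (α : ℝ) (N : ℕ) (hN : 2 ≤ N) (u : ℕ → ℕ)
    (hbij : Set.BijOn u (Set.Iio N) (Set.Iio N))
    (hmono : StrictMonoOn (fun j => Int.fract ((u j : ℝ) * α)) (Set.Iio N)) : u 0 = 0 := by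
  obtain ⟨k, hk, hk0⟩ := u_surj N u hbij 0 (by omega)
  rcases Nat.eq_zero_or_pos k with rfl | hkpos
  · exact hk0
  · exfalso
    have := hmono (show (0:ℕ) ∈ Set.Iio N by simp; omega) (show k ∈ Set.Iio N from hk) hkpos
    simp only [hk0] at this
    simp at this
    have h0 := Int.fract_nonneg ((u 0 : ℝ) * α)
    linarith

private lemma u_mono_lt (α : ℝ) (N : ℕ) (u : ℕ → ℕ)
    (hmono : StrictMonoOn (fun j => Int.fract ((u j : ℝ) * α)) (Set.Iio N)) : ∀ k l, k < N → l < N → k < l →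
    Int.fract ((u k : ℝ) * α) < Int.fract ((u l : ℝ) * α) := by
  intro k l hk hl hkl
  exact hmono (show k ∈ Set.Iio N from hk) (show l ∈ Set.Iio N from hl) hkl

/-- Lemma A: the gap at `u j` is realized by the circular successor. -/
private lemma gapA (α : ℝ) (hα : Irrational α) (N : ℕ) (hN : 2 ≤ N) (u : ℕ → ℕ)
    (hbij : Set.BijOn u (Set.Iio N) (Set.Iio N))
    (hmono : StrictMonoOn (fun j => Int.fract ((u j : ℝ) * α)) (Set.Iio N)) (j : ℕ) (hj : j < N) :
    gapAt α N (u j) = Int.fract ((((u ((j+1) % N) : ℤ) - (u j : ℤ)) : ℝ) * α) := by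
  have hfr : ∀ k l : ℕ, ((u k : ℝ) * α - (u l : ℝ) * α)
      = (((u k : ℤ) - (u l : ℤ) : ℤ) : ℝ) * α := by intro k l; push_cast; ring
  have key : ∀ k l : ℕ, Int.fract ((u k : ℝ) * α - (u l : ℝ) * α)
      = Int.fract ((((u k : ℤ) - (u l : ℤ)) : ℝ) * α) := by
    intro k l; rw [hfr]; norm_cast
  rcases lt_or_ge (j+1) N with hjj | hjj
  · -- interior case: successor is u (j+1)
    rw [Nat.mod_eq_of_lt hjj]
    rw [← key]
    have hlt : Int.fract ((u j : ℝ) * α) < Int.fract ((u (j+1) : ℝ) * α) :=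
      u_mono_lt α N u hmono j (j+1) hj hjj (by omega)
    apply gapAt_eq
    · rw [fract_sub_le' (le_of_lt hlt)]; linarith
    · exact ⟨u (j+1), u_lt N u hbij (j+1) hjj, rfl⟩
    · intro m' hm' hpos
      obtain ⟨k, hk, rfl⟩ := u_surj N u hbij m' hm'
      rcases lt_trichotomy k j with hkj | rfl | hkj
      · have hklt := u_mono_lt α N u hmono k j hk hj hkj
        rw [fract_sub_lt' hklt, fract_sub_le' (le_of_lt hlt)]
        have := Int.fract_lt_one ((u (j+1) : ℝ) * α)
        have := Int.fract_nonneg ((u k : ℝ) * α)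
        linarith
      · exfalso; rw [sub_self, Int.fract_zero] at hpos; linarith
      · have hle : Int.fract ((u (j+1) : ℝ) * α) ≤ Int.fract ((u k : ℝ) * α) := by
          rcases eq_or_lt_of_le (show j + 1 ≤ k by omega) with rfl | hlt2
          · exact le_refl _
          · exact le_of_lt (u_mono_lt α N u hmono (j+1) k hjj hk hlt2)
        rw [fract_sub_le' (le_of_lt hlt),
          fract_sub_le' (le_of_lt (lt_of_lt_of_le hlt hle))]
        linarith
  · -- wrap-around case: j = N - 1, successor is u 0 = 0
    have hj1 : j + 1 = N := by omega
    have hmod : (j+1) % N = 0 := by rw [hj1, Nat.mod_self]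
    have h00 : u 0 = 0 := u_zero α N hN u hbij hmono
    have huj0 : u j ≠ 0 := by
      intro h
      have := u_inj N u hbij j 0 hj (by omega) (h.trans h00.symm)
      omega
    have hfj : 0 < Int.fract ((u j : ℝ) * α) := fract_nzN α hα huj0
    have hval : Int.fract ((((u 0 : ℤ) - (u j : ℤ)) : ℝ) * α) = 1 - Int.fract ((u j : ℝ) * α) := by
      have h1 : (((u 0 : ℤ) - (u j : ℤ)) : ℝ) * α = -((u j : ℝ) * α) := by
        rw [h00]; push_cast; ring
      rw [h1, Int.fract_neg (ne_of_gt hfj)]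
    rw [hmod, hval]
    apply gapAt_eq
    · have := Int.fract_lt_one ((u j : ℝ) * α); linarith
    · refine ⟨0, by omega, ?_⟩
      have h0 : ((0:ℕ) : ℝ) * α - (u j : ℝ) * α = -((u j : ℝ) * α) := by push_cast; ring
      rw [h0, Int.fract_neg (ne_of_gt hfj)]
    · intro m' hm' hpos
      obtain ⟨k, hk, rfl⟩ := u_surj N u hbij m' hm'
      rcases lt_trichotomy k j with hkj | rfl | hkj
      · have hklt := u_mono_lt α N u hmono k j hk hj hkj
        rw [fract_sub_lt' hklt]
        have := Int.fract_nonneg ((u k : ℝ) * α)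
        linarith
      · exfalso; rw [sub_self, Int.fract_zero] at hpos; linarith
      · omega


private lemma minA (α : ℝ) (hα : Irrational α) (N : ℕ) (hN : 2 ≤ N) (u : ℕ → ℕ)
    (hbij : Set.BijOn u (Set.Iio N) (Set.Iio N))
    (hmono : StrictMonoOn (fun j => Int.fract ((u j : ℝ) * α)) (Set.Iio N))
    (e : ℕ) (he : e ≠ 0) (heN : e < N) :
    Int.fract ((u 1 : ℝ) * α) ≤ Int.fract ((e : ℝ) * α) := by
  obtain ⟨k, hk, rfl⟩ := u_surj N u hbij e heN
  have hk0 : k ≠ 0 := by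
    intro h; subst h; rw [u_zero α N hN u hbij hmono] at he; exact he rfl
  rcases eq_or_lt_of_le (show 1 ≤ k by omega) with rfl | h
  · exact le_refl _
  · exact le_of_lt (u_mono_lt α N u hmono 1 k (by omega) hk h)

private lemma gap_a (α : ℝ) (hα : Irrational α) (N : ℕ) (hN : 2 ≤ N) (u : ℕ → ℕ)
    (hbij : Set.BijOn u (Set.Iio N) (Set.Iio N))
    (hmono : StrictMonoOn (fun j => Int.fract ((u j : ℝ) * α)) (Set.Iio N))
    (m : ℕ) (hm : m + u 1 < N) :
    gapAt α N m = Int.fract ((u 1 : ℝ) * α) := by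
  have ha0 : u 1 ≠ 0 := by
    intro h
    have := u_inj N u hbij 1 0 (by omega) (by omega)
      (h.trans (u_zero α N hN u hbij hmono).symm)
    omega
  set a := u 1 with ha
  have hposa : 0 < Int.fract ((a:ℝ)*α) := fract_nzN α hα ha0
  apply gapAt_eq
  · exact hposa
  · refine ⟨m + a, hm, ?_⟩
    congr 1
    push_cast; ring
  · intro m' hm' hpos
    rcases lt_trichotomy m' m with hlt | rfl | hgt
    · set e := m - m' with he
      have he0 : e ≠ 0 := by omega
      have heN : e < N := by omega
      have hfe : Int.fract ((m':ℝ)*α - (m:ℝ)*α) = 1 - Int.fract ((e:ℝ)*α) := by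
        have h1 : (m':ℝ)*α - (m:ℝ)*α = -((e:ℝ)*α) := by
          have h2 : (e:ℝ) = (m:ℝ) - m' := by
            rw [he, Nat.cast_sub (le_of_lt hlt)]
          rw [h2]; ring
        rw [h1, Int.fract_neg (ne_of_gt (fract_nzN α hα he0))]
      rw [hfe]
      by_contra hcon
      push_neg at hcon
      have hsum : 1 ≤ Int.fract ((a:ℝ)*α) + Int.fract ((e:ℝ)*α) := by linarith
      have hwN : a + e < N := by omega
      have hw0 : a + e ≠ 0 := by omega
      have hfw : Int.fract (((a+e:ℕ):ℝ)*α)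
          = Int.fract ((a:ℝ)*α) + Int.fract ((e:ℝ)*α) - 1 := by
        have h1 : ((a+e:ℕ):ℝ)*α = (a:ℝ)*α + (e:ℝ)*α := by push_cast; ring
        rw [h1, fract_add_ge1 hsum]
      have hmin := minA α hα N hN u hbij hmono (a+e) hw0 hwN
      rw [hfw] at hmin
      have := Int.fract_lt_one ((e:ℝ)*α)
      linarith
    · exfalso; rw [sub_self, Int.fract_zero] at hpos; linarith
    · set e := m' - m with he
      have he0 : e ≠ 0 := by omega
      have heN : e < N := by omega
      have h1 : (m':ℝ)*α - (m:ℝ)*α = (e:ℝ)*α := by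
        rw [he, Nat.cast_sub (le_of_lt hgt)]; ring
      rw [h1]
      exact minA α hα N hN u hbij hmono e he0 heN

open Classical in
private lemma sumperm (N : ℕ) (v : ℕ → ℕ) (g : ℕ → ℤ)
    (hv : ∀ k, k < N → v k < N)
    (hinj : ∀ k l, k < N → l < N → v k = v l → k = l) :
    ∑ k ∈ Finset.range N, g (v k) = ∑ m ∈ Finset.range N, g m := by
  have himg : (Finset.range N).image v = Finset.range N := by
    apply Finset.eq_of_subset_of_card_le
    · intro m hm
      obtain ⟨k, hk, rfl⟩ := Finset.mem_image.1 hm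
      exact Finset.mem_range.2 (hv k (Finset.mem_range.1 hk))
    · rw [Finset.card_image_of_injOn]
      intro k hk l hl h
      exact hinj k l (by simpa using hk) (by simpa using hl) h
  rw [← Finset.sum_image (f := g) (g := v) (s := Finset.range N)
    (fun k hk l hl h => hinj k l (Finset.mem_range.1 hk) (Finset.mem_range.1 hl) h), himg]

private lemma shift_inj (N : ℕ) (hN : 2 ≤ N) :
    ∀ k l, k < N → l < N → (k+1) % N = (l+1) % N → k = l := by
  intro k l hk hl h
  rcases eq_or_lt_of_le (show k+1 ≤ N by omega) with ek | ek <;>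
    rcases eq_or_lt_of_le (show l+1 ≤ N by omega) with el | el
  · omega
  · rw [ek, Nat.mod_self, Nat.mod_eq_of_lt el] at h; omega
  · rw [el, Nat.mod_self, Nat.mod_eq_of_lt ek] at h; omega
  · rw [Nat.mod_eq_of_lt ek, Nat.mod_eq_of_lt el] at h; omega

private lemma master (α : ℝ) (hα : Irrational α) (N : ℕ) (hN : 2 ≤ N) (u : ℕ → ℕ)
    (hbij : Set.BijOn u (Set.Iio N) (Set.Iio N))
    (hmono : StrictMonoOn (fun j => Int.fract ((u j : ℝ) * α)) (Set.Iio N))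
    (hrel : (gapSet α N).card = 2) :
    ∀ j, j < N → (u ((j+1) % N) : ℤ) - (u j : ℤ) = (u 1 : ℤ) ∨
      (u ((j+1) % N) : ℤ) - (u j : ℤ) = (u 1 : ℤ) - N := by
  classical
  have haN : u 1 < N := u_lt N u hbij 1 (by omega)
  have ha0 : u 1 ≠ 0 := by
    intro h
    have := u_inj N u hbij 1 0 (by omega) (by omega)
      (h.trans (u_zero α N hN u hbij hmono).symm)
    omega
  -- step B
  have hB : ∀ k, k < N → u k + u 1 < N → (u ((k+1)%N) : ℤ) - u k = u 1 := by
    intro k hk hks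
    have h1 := gapA α hα N hN u hbij hmono k hk
    have h2 := gap_a α hα N hN u hbij hmono (u k) hks
    rw [h2] at h1
    push_cast at h1
    have h3 : Int.fract (((u 1 : ℤ) : ℝ) * α)
        = Int.fract ((((u ((k+1)%N) : ℤ) - (u k : ℤ) : ℤ) : ℝ) * α) := by
      push_cast
      exact h1
    have := fract_inj α hα h3
    omega
  -- step C
  have hC : ∀ k, k < N → N ≤ u k + u 1 → (u ((k+1)%N) : ℤ) - u k ≠ u 1 := by
    intro k hk hks hcon
    have h1 : u ((k+1)%N) < N := u_lt N u hbij _ (Nat.mod_lt _ (by omega))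
    omega
  -- gapSet facts
  obtain ⟨x, y, hxy, hset⟩ := Finset.card_eq_two.1 hrel
  have hg1mem : Int.fract ((u 1 : ℝ) * α) ∈ gapSet α N := by
    have h0 : gapAt α N 0 = Int.fract ((u 1 : ℝ) * α) :=
      gap_a α hα N hN u hbij hmono 0 (by omega)
    exact Finset.mem_image.2 ⟨0, Finset.mem_range.2 (by omega), h0⟩
  have hgmem : ∀ k, k < N → gapAt α N (u k) ∈ gapSet α N := fun k hk =>
    Finset.mem_image.2 ⟨u k, Finset.mem_range.2 (u_lt N u hbij k hk), rfl⟩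
  have hne1 : ∀ k, k < N → N ≤ u k + u 1 →
      gapAt α N (u k) ≠ Int.fract ((u 1 : ℝ) * α) := by
    intro k hk hks hcon
    have h1 := gapA α hα N hN u hbij hmono k hk
    rw [h1] at hcon
    push_cast at hcon
    have h3 : Int.fract ((((u ((k+1)%N) : ℤ) - (u k : ℤ) : ℤ) : ℝ) * α)
        = Int.fract (((u 1 : ℤ) : ℝ) * α) := by
      push_cast
      exact hcon
    exact hC k hk hks (fract_inj α hα h3)
  have hsame : ∀ k k', k < N → k' < N → N ≤ u k + u 1 → N ≤ u k' + u 1 →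
      gapAt α N (u k) = gapAt α N (u k') := by
    intro k k' hk hk' h1 h2
    have m1 := hgmem k hk; have m2 := hgmem k' hk'
    rw [hset] at m1 m2 hg1mem
    simp only [Finset.mem_insert, Finset.mem_singleton] at m1 m2 hg1mem
    have n1 := hne1 k hk h1; have n2 := hne1 k' hk' h2
    rcases hg1mem with h | h <;> rcases m1 with e1 | e1 <;> rcases m2 with e2 | e2 <;>
      simp_all
  -- the second difference value
  obtain ⟨j₁, hj₁, hj₁v⟩ := u_surj N u hbij (N-1) (by omega)
  have hj₁s : N ≤ u j₁ + u 1 := by omega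
  have hCc : ∀ k, k < N → N ≤ u k + u 1 →
      (u ((k+1)%N) : ℤ) - u k = (u ((j₁+1)%N) : ℤ) - u j₁ := by
    intro k hk hks
    have h1 := gapA α hα N hN u hbij hmono k hk
    have h2 := gapA α hα N hN u hbij hmono j₁ hj₁
    have h3 := hsame k j₁ hk hj₁ hks hj₁s
    rw [h1, h2] at h3
    push_cast at h3
    have h4 : Int.fract ((((u ((k+1)%N) : ℤ) - (u k : ℤ) : ℤ) : ℝ) * α)
        = Int.fract ((((u ((j₁+1)%N) : ℤ) - (u j₁ : ℤ) : ℤ) : ℝ) * α) := by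
      push_cast
      exact h3
    exact fract_inj α hα h4
  set c : ℤ := (u ((j₁+1)%N) : ℤ) - u j₁ with hc
  -- telescoping sum is zero
  have hsum0 : ∑ k ∈ Finset.range N, ((u ((k+1)%N) : ℤ) - (u k : ℤ)) = 0 := by
    rw [Finset.sum_sub_distrib]
    rw [show ∑ k ∈ Finset.range N, (u ((k+1)%N) : ℤ)
        = ∑ k ∈ Finset.range N, ((fun m => (u m : ℤ)) ((k+1)%N)) from rfl]
    rw [sumperm N (fun k => (k+1)%N) (fun m => (u m : ℤ))
      (fun k hk => Nat.mod_lt _ (by omega)) (shift_inj N hN)]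
    exact sub_self _
  -- rewrite each term via f ∘ u
  set f : ℕ → ℤ := fun m => if m + u 1 < N then (u 1 : ℤ) else c with hf
  have hdf : ∀ k, k < N → (u ((k+1)%N) : ℤ) - u k = f (u k) := by
    intro k hk
    by_cases hks : u k + u 1 < N
    · rw [hf]; simp only [if_pos hks]; exact hB k hk hks
    · rw [hf]; simp only [if_neg hks]; exact hCc k hk (by omega)
  have hsum1 : ∑ k ∈ Finset.range N, f (u k) = 0 := by
    rw [← hsum0]
    exact (Finset.sum_congr rfl (fun k hk =>
      (hdf k (Finset.mem_range.1 hk)).symm))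
  have hsum2 : ∑ m ∈ Finset.range N, f m = 0 := by
    rw [← sumperm N u f (u_lt N u hbij) (u_inj N u hbij)]
    exact hsum1
  -- compute the sum of f
  have hfilter1 : (Finset.range N).filter (fun m => m + u 1 < N) = Finset.range (N - u 1) := by
    ext m
    simp only [Finset.mem_filter, Finset.mem_range]
    omega
  have hcard2 : ((Finset.range N).filter (fun m => ¬ (m + u 1 < N))).card = u 1 := by
    have := Finset.card_filter_add_card_filter_not
      (s := Finset.range N) (p := fun m => m + u 1 < N)
    rw [hfilter1] at this
    simp only [Finset.card_range] at this
    omega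
  have hsum3 : ∑ m ∈ Finset.range N, f m
      = ((N - u 1 : ℕ) : ℤ) * (u 1 : ℤ) + ((u 1 : ℕ) : ℤ) * c := by
    rw [hf]
    rw [Finset.sum_ite (fun _ => (u 1 : ℤ)) (fun _ => c)]
    rw [Finset.sum_const, Finset.sum_const, hfilter1, hcard2, Finset.card_range]
    push_cast
    ring
  -- solve for c
  have hceq : c = (u 1 : ℤ) - N := by
    have hEq : ((N : ℤ) - (u 1 : ℤ)) * (u 1 : ℤ) + ((u 1 : ℕ) : ℤ) * c = 0 := by
      rw [hsum3] at hsum2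
      rw [← hsum2]
      rw [Nat.cast_sub (le_of_lt haN)]
    have ha0' : ((u 1 : ℕ) : ℤ) ≠ 0 := by exact_mod_cast ha0
    have h2 : ((u 1 : ℕ) : ℤ) * c = ((u 1 : ℕ) : ℤ) * ((u 1 : ℤ) - N) := by
      linear_combination hEq
    exact mul_left_cancel₀ ha0' h2
  -- conclusion
  intro j hj
  by_cases hjs : u j + u 1 < N
  · exact Or.inl (hB j hj hjs)
  · right
    rw [hCc j hj (by omega), hceq]

private lemma uc_succ (N : ℕ) (hN : 2 ≤ N) (u : ℕ → ℕ) (j : ℤ) :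
    uc N u (j+1) = u (((j % (N:ℤ)).toNat + 1) % N) := by
  unfold uc
  congr 1
  have hN0 : (0:ℤ) < (N:ℤ) := by omega
  set t := (j % (N:ℤ)).toNat with ht
  have h1 : j % (N:ℤ) = (t:ℤ) := (Int.toNat_of_nonneg (Int.emod_nonneg j (by omega))).symm
  have h1' : (1:ℤ) % (N:ℤ) = 1 := Int.emod_eq_of_lt (by omega) (by omega)
  rw [Int.add_emod, h1', h1]
  rw [show ((t:ℤ) + 1) = ((t+1 : ℕ) : ℤ) by push_cast; ring]
  omega

theorem gap_determined_by_index_difference (α : ℝ) (hα : Irrational α) (N : ℕ) (hN : 2 ≤ N)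
    (u : ℕ → ℕ) (hbij : Set.BijOn u (Set.Iio N) (Set.Iio N))
    (hmono : StrictMonoOn (fun j => Int.fract ((u j : ℝ) * α)) (Set.Iio N))
    (hrel : (gapSet α N).card = 2) :
    (∀ j : ℤ, (uc N u (j + 1) : ℤ) = (uc N u j : ℤ) + (u 1 : ℤ) ∨
      (uc N u (j + 1) : ℤ) = (uc N u j : ℤ) + (u 1 : ℤ) - (N : ℤ)) ∧
    ∀ j j' : ℤ, (uc N u (j + 1) : ℤ) - (uc N u j : ℤ) =
        (uc N u (j' + 1) : ℤ) - (uc N u j' : ℤ) →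
      gapAt α N (uc N u j) = gapAt α N (uc N u j') := by
  have key := master α hα N hN u hbij hmono hrel
  have hN0 : (0:ℤ) < (N:ℤ) := by omega
  constructor
  · intro j
    have h1 : j % (N:ℤ) = (((j % (N:ℤ)).toNat : ℕ) : ℤ) :=
      (Int.toNat_of_nonneg (Int.emod_nonneg j (by omega))).symm
    set t := (j % (N:ℤ)).toNat with ht
    have htN : t < N := by
      have := Int.emod_lt_of_pos j hN0
      omega
    rw [show uc N u j = u t from rfl, uc_succ N hN u j, ← ht]
    have := key t htN
    omega
  · intro j j' h
    have h1 : j % (N:ℤ) = (((j % (N:ℤ)).toNat : ℕ) : ℤ) :=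
      (Int.toNat_of_nonneg (Int.emod_nonneg j (by omega))).symm
    have h1' : j' % (N:ℤ) = (((j' % (N:ℤ)).toNat : ℕ) : ℤ) :=
      (Int.toNat_of_nonneg (Int.emod_nonneg j' (by omega))).symm
    set t := (j % (N:ℤ)).toNat with ht
    set t' := (j' % (N:ℤ)).toNat with ht'
    have htN : t < N := by
      have := Int.emod_lt_of_pos j hN0
      omega
    have ht'N : t' < N := by
      have := Int.emod_lt_of_pos j' hN0
      omega
    rw [show uc N u j = u t from rfl, show uc N u j' = u t' from rfl,
      uc_succ N hN u j, uc_succ N hN u j'] at h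
    rw [← ht, ← ht'] at h
    rw [show uc N u j = u t from rfl, show uc N u j' = u t' from rfl,
      gapA α hα N hN u hbij hmono t htN, gapA α hα N hN u hbij hmono t' ht'N]
    have hreal : (((u ((t+1) % N) : ℤ) : ℝ) - ((u t : ℤ) : ℝ))
        = (((u ((t'+1) % N) : ℤ) : ℝ) - ((u t' : ℤ) : ℝ)) := by
      exact_mod_cast h
    rw [hreal]
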